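/- arXiv:1005.4348 — 2 statements merged into one kernel-verified Lean document; each statement's English description precedes it below -/
import Mathlib

section
/- Let ρ be a d_A·d_B × d_A·d_B complex matrix such that ρ = Σ_{i=1}^n R_i ⊗ (b_i b_i†) for some linearly independent vectors b_1, …, b_n ∈ ℂ^{d_B} and positive semidefinite d_A × d_A matrices R_i, and also ρ = Σ_{j=1}^m (a_j a_j†) ⊗ S_j for some linearly independent vectors a_1, …, a_m ∈ ℂ^{d_A} and positive semidefinite d_B × d_B matrices S_j. Then there exist nonnegative real numbers c_{j i} such that ρ = Σ_{j=1}^m Σ_{i=1}^n c_{j i} · (a_j ⊗ b_i)(a_j ⊗ b_i)†. -/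
open Matrix
open scoped Kronecker ComplexOrder

/-- The outer product `v v†` of a vector with itself. -/
def outer {n : Type*} (v : n → ℂ) : Matrix n n ℂ :=
  Matrix.vecMulVec v (star v)

/-- The Kronecker (tensor) product of two vectors. -/
def kronVec {m n : Type*} (u : m → ℂ) (v : n → ℂ) : m × n → ℂ :=
  fun p => u p.1 * v p.2

/-- For a linearly independent family there is a dual family of vectors. -/
lemma exists_dual {d n : ℕ} (b : Fin n → (Fin d → ℂ)) (hb : LinearIndependent ℂ b) :
    ∃ β : Fin n → (Fin d → ℂ), ∀ k i, star (β k) ⬝ᵥ b i = if i = k then 1 else 0 := by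
  classical
  obtain ⟨q, hq⟩ := (Submodule.span ℂ (Set.range b)).exists_isCompl
  set proj := Submodule.linearProjOfIsCompl _ q hq
  set B := Module.Basis.span hb
  set g : Fin n → ((Fin d → ℂ) →ₗ[ℂ] ℂ) := fun k => (B.coord k).comp proj
  have hg : ∀ k i, g k (b i) = if i = k then 1 else 0 := by
    intro k i
    have hmem : b i ∈ Submodule.span ℂ (Set.range b) :=
      Submodule.subset_span (Set.mem_range_self i)
    have : proj (b i) = ⟨b i, hmem⟩ := Submodule.linearProjOfIsCompl_apply_left hq ⟨b i, hmem⟩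
    have hBi : (⟨b i, hmem⟩ : Submodule.span ℂ (Set.range b)) = B i := by
      ext; simp [B, Module.Basis.span_apply]
    simp only [g, LinearMap.comp_apply, this, hBi, Module.Basis.coord_apply, Module.Basis.repr_self]
    simp [Finsupp.single_apply]
  refine ⟨fun k p => starRingEnd ℂ (g k (Pi.single p (1:ℂ))), fun k i => ?_⟩
  have : star (fun p => starRingEnd ℂ (g k (Pi.single p (1:ℂ)))) ⬝ᵥ b i = g k (b i) := by
    have hx : b i = ∑ p, (b i p) • (Pi.single p 1 : Fin d → ℂ) := by
      ext q; simp [Pi.single_apply, Finset.sum_apply, eq_comm]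
    conv_rhs => rw [hx]
    simp [dotProduct, map_sum, Pi.star_apply, mul_comm]
  rw [this, hg]

/-- Contraction of the second tensor factor with a vector `w`. -/
noncomputable def ctr {dA dB : ℕ} (w : Fin dB → ℂ)
    (M : Matrix (Fin dA × Fin dB) (Fin dA × Fin dB) ℂ) :
    Matrix (Fin dA) (Fin dA) ℂ :=
  fun x y => ∑ p, ∑ q, starRingEnd ℂ (w p) * M (x, p) (y, q) * w q

lemma ctr_sum {dA dB : ℕ} (w : Fin dB → ℂ) {ι : Type*} (s : Finset ι)
    (M : ι → Matrix (Fin dA × Fin dB) (Fin dA × Fin dB) ℂ) :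
    ctr w (∑ i ∈ s, M i) = ∑ i ∈ s, ctr w (M i) := by
  ext x y
  simp only [ctr, Matrix.sum_apply, Finset.mul_sum, Finset.sum_mul]
  trans ∑ p, ∑ i ∈ s, ∑ q, starRingEnd ℂ (w p) * M i (x, p) (y, q) * w q
  · exact Finset.sum_congr rfl fun p _ => Finset.sum_comm
  · exact Finset.sum_comm

lemma ctr_kron {dA dB : ℕ} (w : Fin dB → ℂ) (X : Matrix (Fin dA) (Fin dA) ℂ)
    (Y : Matrix (Fin dB) (Fin dB) ℂ) :
    ctr w (X ⊗ₖ Y) = (star w ⬝ᵥ Y *ᵥ w) • X := by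
  ext x y
  simp only [ctr, kroneckerMap_apply, Matrix.smul_apply, dotProduct, mulVec, dotProduct,
    Pi.star_apply, smul_eq_mul, Finset.mul_sum, Finset.sum_mul]
  congr 1; ext p; congr 1; ext q
  simp [RCLike.star_def]; ring

lemma quad_outer {d : ℕ} (u w : Fin d → ℂ) :
    star w ⬝ᵥ (outer u) *ᵥ w = (star w ⬝ᵥ u) * starRingEnd ℂ (star w ⬝ᵥ u) := by
  simp only [outer, dotProduct, mulVec, vecMulVec_apply, Pi.star_apply, map_sum,
    _root_.map_mul, Finset.mul_sum, Finset.sum_mul]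
  rw [Finset.sum_comm]
  refine Finset.sum_congr rfl fun p _ => Finset.sum_congr rfl fun q _ => ?_
  simp [RCLike.star_def]; ring

lemma outer_kron {dA dB : ℕ} (u : Fin dA → ℂ) (v : Fin dB → ℂ) :
    outer (kronVec u v) = outer u ⊗ₖ outer v := by
  ext ⟨x, p⟩ ⟨y, q⟩
  simp [outer, kronVec, vecMulVec_apply, kroneckerMap_apply]
  ring

lemma sum_kron {dA dB : ℕ} {ι : Type*} (s : Finset ι)
    (X : ι → Matrix (Fin dA) (Fin dA) ℂ) (Y : Matrix (Fin dB) (Fin dB) ℂ) :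
    (∑ j ∈ s, X j) ⊗ₖ Y = ∑ j ∈ s, X j ⊗ₖ Y := by
  ext ⟨x, p⟩ ⟨y, q⟩
  simp [kroneckerMap_apply, Matrix.sum_apply, Finset.sum_mul]

/-- Lemma 2, bipartite generalized-classical case: a state that is
generalized-classical for both parties is fully generalized-classical. -/
theorem genClassical_both_parties_is_fully_genClassical
    {dA dB n m : ℕ}
    (ρ : Matrix (Fin dA × Fin dB) (Fin dA × Fin dB) ℂ)
    (b : Fin n → (Fin dB → ℂ)) (hb : LinearIndependent ℂ b)
    (R : Fin n → Matrix (Fin dA) (Fin dA) ℂ) (hR : ∀ i, (R i).PosSemidef)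
    (hB : ρ = ∑ i, R i ⊗ₖ outer (b i))
    (a : Fin m → (Fin dA → ℂ)) (ha : LinearIndependent ℂ a)
    (S : Fin m → Matrix (Fin dB) (Fin dB) ℂ) (hS : ∀ j, (S j).PosSemidef)
    (hA : ρ = ∑ j, outer (a j) ⊗ₖ S j) :
    ∃ c : Fin m → Fin n → ℝ, (∀ j i, 0 ≤ c j i) ∧
      ρ = ∑ j, ∑ i, (c j i : ℂ) • outer (kronVec (a j) (b i)) := by
  classical
  obtain ⟨β, hβ⟩ := exists_dual b hb
  set t : Fin m → Fin n → ℂ := fun j i => star (β i) ⬝ᵥ S j *ᵥ β i with ht_def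
  have ht : ∀ j i, 0 ≤ t j i := fun j i => (hS j).dotProduct_mulVec_nonneg (β i)
  have key : ∀ k, R k = ∑ j, t j k • outer (a j) := by
    intro k
    have h1 : ctr (β k) ρ = R k := by
      rw [hB, ctr_sum]
      have : ∀ i, ctr (β k) (R i ⊗ₖ outer (b i)) = (if i = k then (1:ℂ) else 0) • R i := by
        intro i
        rw [ctr_kron, quad_outer, hβ]
        congr 1
        split <;> simp
      simp only [this, ite_smul, one_smul, zero_smul]
      simp
    have h2 : ctr (β k) ρ = ∑ j, t j k • outer (a j) := by
      rw [hA, ctr_sum]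
      exact Finset.sum_congr rfl fun j _ => ctr_kron _ _ _
    rw [← h1, h2]
  refine ⟨fun j i => (t j i).re, fun j i => (Complex.le_def.mp (ht j i)).1, ?_⟩
  have hcast : ∀ j i, ((t j i).re : ℂ) = t j i := by
    intro j i
    have him : (t j i).im = 0 := ((Complex.le_def.mp (ht j i)).2).symm
    exact Complex.ext rfl (by simp [him])
  calc ρ = ∑ i, R i ⊗ₖ outer (b i) := hB
    _ = ∑ i, ∑ j, t j i • (outer (a j) ⊗ₖ outer (b i)) := by
        refine Finset.sum_congr rfl fun i _ => ?_
        rw [key i, sum_kron]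
        exact Finset.sum_congr rfl fun j _ => Matrix.smul_kronecker _ _ _
    _ = ∑ j, ∑ i, t j i • (outer (a j) ⊗ₖ outer (b i)) := Finset.sum_comm
    _ = ∑ j, ∑ i, (((t j i).re : ℝ) : ℂ) • outer (kronVec (a j) (b i)) := by
        refine Finset.sum_congr rfl fun j _ => Finset.sum_congr rfl fun i _ => ?_
        rw [outer_kron, hcast]
end

section
/- Let b_1, …, b_n be unit vectors in ℂ^d. Then the following are equivalent: (1) the vectors b_1, …, b_n are orthonormal; (2) there exist d × d complex matrices M_1, …, M_n such that I − Σ_{i=1}^n M_i† M_i is positive semidefinite and M_i (b_j b_j†) M_i† = δ_{ij} · (b_j b_j†) for all i, j. -/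
open Matrix
open scoped ComplexOrder

lemma outer_conjTranspose {n : Type*} (v : n → ℂ) : (outer v)ᴴ = outer v := by
  ext i j
  simp [outer, vecMulVec_apply, conjTranspose_apply, mul_comm]

lemma mul_outer_mul {m n : Type*} [Fintype n] (M : Matrix m n ℂ) (v : n → ℂ) :
    M * outer v * Mᴴ = outer (M *ᵥ v) := by
  ext i j
  simp only [outer, vecMulVec_apply, mul_apply, conjTranspose_apply, mulVec, dotProduct,
    Pi.star_apply, RCLike.star_def]
  rw [map_sum, Finset.sum_mul_sum, Finset.sum_comm]
  refine Finset.sum_congr rfl fun l _ => ?_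
  rw [Finset.sum_mul]
  refine Finset.sum_congr rfl fun k _ => ?_
  simp only [_root_.map_mul]
  ring

lemma outer_mulVec {n : Type*} [Fintype n] (v x : n → ℂ) :
    outer v *ᵥ x = (star v ⬝ᵥ x) • v := by
  ext i
  simp only [outer, vecMulVec_apply, mulVec, dotProduct, Pi.smul_apply, smul_eq_mul,
    Pi.star_apply, Finset.sum_mul]
  exact Finset.sum_congr rfl fun k _ => by ring

lemma outer_eq_zero {n : Type*} {v : n → ℂ} (h : outer v = 0) : v = 0 := by
  funext k
  have := congrFun (congrFun h k) k
  simp only [outer, vecMulVec_apply, Pi.star_apply, Matrix.zero_apply] at this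
  rw [RCLike.star_def, Complex.mul_conj] at this
  exact_mod_cast Complex.normSq_eq_zero.mp (by exact_mod_cast this)

lemma trace_outer {n : Type*} [Fintype n] (v : n → ℂ) :
    (outer v).trace = star v ⬝ᵥ v := by
  simp [trace, outer, vecMulVec_apply, dotProduct, diag, mul_comm]

lemma outer_smul {n : Type*} (c : ℂ) (v : n → ℂ) :
    outer (c • v) = (c * star c) • outer v := by
  ext i j
  simp only [outer, vecMulVec_apply, Pi.smul_apply, Pi.star_apply, smul_eq_mul,
    Matrix.smul_apply, star_mul']
  ring

lemma outer_mul_self {n : Type*} [Fintype n] (v : n → ℂ) (hv : star v ⬝ᵥ v = 1) :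
    outer v * outer v = outer v := by
  ext i j
  simp only [outer, vecMulVec_apply, mul_apply, Pi.star_apply]
  have : ∀ k, v i * star (v k) * (v k * star (v j))
      = star (v k) * v k * (v i * star (v j)) := fun k => by ring
  rw [Finset.sum_congr rfl fun k _ => this k, ← Finset.sum_mul]
  have hv' : ∑ k, star (v k) * v k = 1 := by
    simpa [dotProduct] using hv
  rw [hv', one_mul]

lemma sum_mulVec' {m n ι : Type*} [Fintype n] (s : Finset ι)
    (A : ι → Matrix m n ℂ) (x : n → ℂ) :
    (∑ i ∈ s, A i) *ᵥ x = ∑ i ∈ s, A i *ᵥ x := by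
  funext j
  simp only [mulVec, dotProduct, Matrix.sum_apply, Finset.sum_apply, Finset.sum_mul]
  exact Finset.sum_comm

lemma dotProduct_sum' {n ι : Type*} [Fintype n] (s : Finset ι)
    (x : n → ℂ) (w : ι → n → ℂ) :
    x ⬝ᵥ (∑ i ∈ s, w i) = ∑ i ∈ s, x ⬝ᵥ w i := by
  simp only [dotProduct, Finset.sum_apply, Finset.mul_sum]
  exact Finset.sum_comm

/-- quadratic form of `Aᴴ A`. -/
lemma dot_conjTranspose_mul {m n : Type*} [Fintype m] [Fintype n]
    (A : Matrix m n ℂ) (x y : n → ℂ) :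
    star x ⬝ᵥ ((Aᴴ * A) *ᵥ y) = star (A *ᵥ x) ⬝ᵥ (A *ᵥ y) := by
  rw [← mulVec_mulVec, dotProduct_mulVec, ← star_mulVec]

/-- NDLID with unit success rate: unit vectors `b_1, …, b_n` admit a
generalized measurement unambiguously discriminating them with success rate
`λ = 1` iff they are orthonormal. -/
theorem NDLID_unit_rate_iff_orthonormal
    {d n : ℕ} (b : Fin n → (Fin d → ℂ))
    (hunit : ∀ i, star (b i) ⬝ᵥ b i = 1) :
    (∀ i j, star (b i) ⬝ᵥ b j = if i = j then 1 else 0) ↔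
    (∃ M : Fin n → Matrix (Fin d) (Fin d) ℂ,
      ((1 : Matrix (Fin d) (Fin d) ℂ) - ∑ i, (M i)ᴴ * M i).PosSemidef ∧
      ∀ i j, M i * outer (b j) * (M i)ᴴ =
        (if i = j then (1 : ℂ) else 0) • outer (b j)) := by
  constructor
  · -- orthonormal → measurement exists
    intro h
    refine ⟨fun i => outer (b i), ?_, ?_⟩
    · -- positive semidefiniteness via Bessel's inequality
      have hsum : (∑ i, (outer (b i))ᴴ * outer (b i)) = ∑ i, outer (b i) := by
        refine Finset.sum_congr rfl fun i _ => ?_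
        rw [outer_conjTranspose, outer_mul_self (b i) (hunit i)]
      rw [hsum]
      refine PosSemidef.of_dotProduct_mulVec_nonneg ?_ ?_
      · show _ᴴ = _
        rw [conjTranspose_sub, conjTranspose_one, conjTranspose_sum]
        simp only [outer_conjTranspose]
      · intro x
        -- Bessel
        have hv : Orthonormal ℂ (fun i => (WithLp.equiv 2 (Fin d → ℂ)).symm (b i)) := by
          rw [orthonormal_iff_ite]
          intro i j
          simpa [PiLp.inner_apply, RCLike.inner_apply, dotProduct, Pi.star_apply, mul_comm]
            using h i j
        have bessel := hv.sum_inner_products_le (𝕜 := ℂ) ((WithLp.equiv 2 (Fin d → ℂ)).symm x)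
          (s := Finset.univ)
        have hinner : ∀ i, (inner (𝕜 := ℂ) ((WithLp.equiv 2 (Fin d → ℂ)).symm (b i))
            ((WithLp.equiv 2 (Fin d → ℂ)).symm x)) = star (b i) ⬝ᵥ x := by
          intro i
          simp [PiLp.inner_apply, RCLike.inner_apply, dotProduct, Pi.star_apply, mul_comm]
        have hnorm : ‖(WithLp.equiv 2 (Fin d → ℂ)).symm x‖ ^ 2 = ∑ k, ‖x k‖ ^ 2 := by
          rw [EuclideanSpace.norm_eq, Real.sq_sqrt (by positivity)]
          rfl
        rw [hnorm] at bessel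
        simp only [hinner] at bessel
        -- compute the quadratic form
        have hq : star x ⬝ᵥ ((1 - ∑ i, outer (b i)) *ᵥ x)
            = ((∑ k, ‖x k‖ ^ 2 : ℝ) : ℂ) - ((∑ i, ‖star (b i) ⬝ᵥ x‖ ^ 2 : ℝ) : ℂ) := by
          rw [sub_mulVec, one_mulVec, sum_mulVec', dotProduct_sub, dotProduct_sum']
          congr 1
          · push_cast
            simp only [dotProduct, Pi.star_apply]
            refine Finset.sum_congr rfl fun k _ => ?_
            rw [RCLike.star_def, RCLike.conj_mul]
            norm_cast
          · push_cast
            refine Finset.sum_congr rfl fun i _ => ?_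
            rw [outer_mulVec, dotProduct_smul, smul_eq_mul]
            have : star x ⬝ᵥ b i = star (star (b i) ⬝ᵥ x) := by
              exact star_dotProduct ..
            rw [this, RCLike.star_def, RCLike.mul_conj]
            norm_cast
        rw [hq, ← Complex.ofReal_sub]
        exact Complex.zero_le_real.mpr (sub_nonneg.mpr bessel)
    · intro i j
      rw [mul_outer_mul, outer_mulVec, outer_smul, h i j]
      by_cases hij : i = j
      · subst hij; simp
      · simp [hij]
  · -- measurement exists → orthonormal
    rintro ⟨M, hP, hMM⟩ i j
    -- the transformed vectors
    have key : ∀ i j, outer (M i *ᵥ b j) = (if i = j then (1 : ℂ) else 0) • outer (b j) := by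
      intro i j
      rw [← mul_outer_mul]
      exact hMM i j
    have hzero : ∀ i j, i ≠ j → M i *ᵥ b j = 0 := by
      intro i j hij
      apply outer_eq_zero
      rw [key i j, if_neg hij, zero_smul]
    have hdiag : ∀ j, star (M j *ᵥ b j) ⬝ᵥ (M j *ᵥ b j) = 1 := by
      intro j
      rw [← trace_outer, key j j, if_pos rfl, one_smul, trace_outer, hunit j]
    -- the quadratic form of `1 - ∑ Mᴴ M` vanishes at each `b j`
    have hqf : ∀ j, ((1 : Matrix (Fin d) (Fin d) ℂ) - ∑ i, (M i)ᴴ * M i) *ᵥ b j = 0 := by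
      intro j
      rw [← (hP.dotProduct_mulVec_zero_iff (b j))]
      rw [sub_mulVec, one_mulVec, sum_mulVec', dotProduct_sub, dotProduct_sum', hunit j]
      rw [Finset.sum_congr rfl (fun i _ => dot_conjTranspose_mul (M i) (b j) (b j))]
      rw [Finset.sum_eq_single j]
      · rw [hdiag j, sub_self]
      · intro k _ hk
        rw [hzero k j hk]
        simp
      · intro hj; exact absurd (Finset.mem_univ j) hj
    have hS : ∀ j, (∑ i, (M i)ᴴ * M i) *ᵥ b j = b j := by
      intro j
      have := hqf j
      rw [sub_mulVec, one_mulVec, sub_eq_zero] at this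
      exact this.symm
    by_cases hij : i = j
    · rw [if_pos hij, hij, hunit j]
    · rw [if_neg hij]
      calc star (b i) ⬝ᵥ b j
          = star (b i) ⬝ᵥ ((∑ k, (M k)ᴴ * M k) *ᵥ b j) := by rw [hS j]
        _ = ∑ k, star (M k *ᵥ b i) ⬝ᵥ (M k *ᵥ b j) := by
            rw [sum_mulVec', dotProduct_sum']
            exact Finset.sum_congr rfl fun k _ => dot_conjTranspose_mul (M k) (b i) (b j)
        _ = 0 := by
            refine Finset.sum_eq_zero fun k _ => ?_
            by_cases hk : k = j
            · subst hk
              rw [hzero k i (fun h => hij h.symm)]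
              simp
            · rw [hzero k j hk]
              simp
end
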